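/- Reduction of quantum dot boundary conditions to MIT bag boundary conditions (matrix identity behind the Proposition in Section 4): Let θ ∈ [0,2π) with cos θ ≠ 0, let ν ∈ ℝ³ be a unit vector, and set M_θ := diag( √(|cos θ|/(1+sin θ))·I₂ , √(|cos θ|/(1−sin θ))·I₂ ) (a positive self-adjoint invertible 4×4 matrix). Then for every v ∈ ℂ⁴: v = [ (cos θ)·i(α·ν)β + (sin θ)·β ] v holds if and only if M_θ v = ε·i(α·ν)β·(M_θ v), where ε = +1 if cos θ > 0 and ε = −1 if cos θ < 0. Consequently, for θ ∈ [0,π/2)∪(3π/2,2π) the quantum dot Dirac operator satisfies D_ω^θ = M_θ D_ω M_θ, and for θ ∈ (π/2,3π/2) it satisfies D_ω^θ = M_θ D_ω^− M_θ. -/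

import Mathlib

open MeasureTheory Real Set

noncomputable section

/-- The Dirac matrix `α₁`. -/
def alpha1 : Matrix (Fin 4) (Fin 4) ℂ := !![0,0,0,1; 0,0,1,0; 0,1,0,0; 1,0,0,0]

/-- The Dirac matrix `α₂`. -/
def alpha2 : Matrix (Fin 4) (Fin 4) ℂ :=
  !![0,0,0,-Complex.I; 0,0,Complex.I,0; 0,-Complex.I,0,0; Complex.I,0,0,0]

/-- The Dirac matrix `α₃`. -/
def alpha3 : Matrix (Fin 4) (Fin 4) ℂ := !![0,0,1,0; 0,0,0,-1; 1,0,0,0; 0,-1,0,0]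

/-- The Dirac matrix `β`. -/
def betaM : Matrix (Fin 4) (Fin 4) ℂ := !![1,0,0,0; 0,1,0,0; 0,0,-1,0; 0,0,0,-1]

/-- `α · b` for a real vector `b`. -/
def alphaDot (b : Fin 3 → ℝ) : Matrix (Fin 4) (Fin 4) ℂ :=
  (b 0 : ℂ) • alpha1 + (b 1 : ℂ) • alpha2 + (b 2 : ℂ) • alpha3

/-- The matrix `M_θ = diag(√(|cos θ|/(1+sin θ)) I₂, √(|cos θ|/(1−sin θ)) I₂)`. -/
def Mtheta (θ : ℝ) : Matrix (Fin 4) (Fin 4) ℂ :=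
  Matrix.diagonal (fun i => if (i : ℕ) < 2
    then ((Real.sqrt (|Real.cos θ| / (1 + Real.sin θ)) : ℝ) : ℂ)
    else ((Real.sqrt (|Real.cos θ| / (1 - Real.sin θ)) : ℝ) : ℂ))

lemma sq_eq_of_nonneg {x y : ℝ} (hx : 0 ≤ x) (hy : 0 ≤ y) (h : x ^ 2 = y ^ 2) : x = y := by
  nlinarith [sq_nonneg (x - y), sq_nonneg (x + y)]

set_option maxHeartbeats 1000000

/-- Reduction of quantum dot boundary conditions to MIT bag boundary conditions:
for `θ ∈ [0,2π)` with `cos θ ≠ 0` and a unit vector `ν ∈ ℝ³`, a vector `v ∈ ℂ⁴` satisfies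
the quantum dot condition `v = [(cos θ) i(α·ν)β + (sin θ)β] v` iff `M_θ v` satisfies
`M_θ v = ε · i(α·ν)β (M_θ v)` with `ε = sign(cos θ)`. -/
theorem quantum_dot_to_mit (θ : ℝ) (hθ : θ ∈ Set.Ico 0 (2 * π)) (hcos : Real.cos θ ≠ 0)
    (ν : Fin 3 → ℝ) (hν : (∑ j, (ν j) ^ 2) = 1) (v : Fin 4 → ℂ) :
    (v = ((Real.cos θ : ℂ) • (Complex.I • (alphaDot ν * betaM))
        + (Real.sin θ : ℂ) • betaM).mulVec v)
    ↔ (Mtheta θ).mulVec v =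
        (if 0 < Real.cos θ then (1 : ℂ) else -1) •
          (Complex.I • ((alphaDot ν * betaM).mulVec ((Mtheta θ).mulVec v))) := by
  set c := Real.cos θ with hc
  set s := Real.sin θ with hs
  set G := alphaDot ν * betaM with hG
  have hpyth : s ^ 2 + c ^ 2 = 1 := Real.sin_sq_add_cos_sq θ
  have hc2 : 0 < c ^ 2 := lt_of_le_of_ne (sq_nonneg c) (Ne.symm (pow_ne_zero 2 hcos))
  have hs1 : 0 < 1 + s := by nlinarith
  have hs2 : 0 < 1 - s := by nlinarith
  have habs : 0 < |c| := abs_pos.mpr hcos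
  set a := Real.sqrt (|c| / (1 + s)) with haa
  set b := Real.sqrt (|c| / (1 - s)) with hbb
  have ha2 : a ^ 2 = |c| / (1 + s) := Real.sq_sqrt (le_of_lt (div_pos habs hs1))
  have hb2 : b ^ 2 = |c| / (1 - s) := Real.sq_sqrt (le_of_lt (div_pos habs hs2))
  have ha0 : 0 < a := Real.sqrt_pos.mpr (div_pos habs hs1)
  have hb0 : 0 < b := Real.sqrt_pos.mpr (div_pos habs hs2)
  set e : ℝ := if 0 < c then 1 else -1 with he
  have he3 : e ^ 2 = 1 := by rw [he]; split_ifs <;> norm_num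
  have he0 : e ≠ 0 := by rw [he]; split_ifs <;> norm_num
  have hec : e * c = |c| := by
    rw [he]; rcases lt_or_lt_iff_ne.mpr hcos with h | h
    · rw [if_neg (not_lt.mpr h.le), abs_of_neg h]; ring
    · rw [if_pos h, abs_of_pos h]; ring
  have habs2 : |c| ^ 2 = c ^ 2 := sq_abs c
  have K1 : a * |c| = b * (1 - s) := by
    apply sq_eq_of_nonneg (by positivity) (by positivity)
    rw [mul_pow, mul_pow, ha2, hb2]
    field_simp
    linear_combination habs2 + hpyth
  have K2 : b * |c| = a * (1 + s) := by
    apply sq_eq_of_nonneg (by positivity) (by positivity)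
    rw [mul_pow, mul_pow, ha2, hb2]
    field_simp
    linear_combination habs2 + hpyth
  have key1 : a * c = e * (b * (1 - s)) := by
    linear_combination e * K1 + a * e * hec - a * c * he3
  have key2 : b * c = e * (a * (1 + s)) := by
    linear_combination e * K2 + b * e * hec - b * c * he3
  have key1C : (a : ℂ) * c = (e : ℝ) * (b * (1 - s)) := by exact_mod_cast congrArg Complex.ofReal key1
  have key2C : (b : ℂ) * c = (e : ℝ) * (a * (1 + s)) := by exact_mod_cast congrArg Complex.ofReal key2
  have hcC : (c : ℂ) ≠ 0 := by exact_mod_cast hcos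
  have hife : (if 0 < c then (1 : ℂ) else -1) = ((e : ℝ) : ℂ) := by
    rw [he]; split_ifs <;> simp
  rw [hife]
  set K := (c : ℂ) • (Complex.I • G) + (s : ℂ) • betaM with hK
  set R : Matrix (Fin 4) (Fin 4) ℂ := Matrix.diagonal (fun i => if (i : ℕ) < 2
      then ((e * b / c : ℝ) : ℂ) else ((e * a / c : ℝ) : ℂ)) with hR
  have hMth : Mtheta θ = Matrix.diagonal (fun i : Fin 4 => if (i : ℕ) < 2
      then ((a : ℝ) : ℂ) else ((b : ℝ) : ℂ)) := rfl
  clear_value a b c s e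
  have L : (v = K.mulVec v) ↔ (((1 : Matrix (Fin 4) (Fin 4) ℂ) - K).mulVec v = 0) := by
    rw [Matrix.sub_mulVec, Matrix.one_mulVec, sub_eq_zero, eq_comm]
  have hGe : G = !![0, 0, -(ν 2 : ℂ), -((ν 0 : ℂ) - Complex.I * (ν 1 : ℂ));
      0, 0, -((ν 0 : ℂ) + Complex.I * (ν 1 : ℂ)), (ν 2 : ℂ);
      (ν 2 : ℂ), (ν 0 : ℂ) - Complex.I * (ν 1 : ℂ), 0, 0;
      (ν 0 : ℂ) + Complex.I * (ν 1 : ℂ), -(ν 2 : ℂ), 0, 0] := by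
    rw [hG, alphaDot, alpha1, alpha2, alpha3, betaM]
    ext i j
    fin_cases i <;> fin_cases j <;>
      simp [Matrix.mul_apply, Fin.sum_univ_four, Matrix.vecHead, Matrix.vecTail] <;> ring_nf
  have H : ((1 : Matrix (Fin 4) (Fin 4) ℂ) - ((e : ℝ) : ℂ) • (Complex.I • G)) * Mtheta θ
      = R * ((1 : Matrix (Fin 4) (Fin 4) ℂ) - K) := by
    rw [hMth, hR, hK, hGe, betaM]
    ext i j
    rw [Matrix.mul_diagonal, Matrix.diagonal_mul]
    fin_cases i <;> fin_cases j <;>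
      simp [Matrix.one_apply, Matrix.vecHead, Matrix.vecTail] <;>
      (try field_simp) <;>
      first
        | ring
        | skip
    · linear_combination key1C
    · linear_combination key1C
    · linear_combination key2C
    · linear_combination key2C
  have hRinj : ∀ x : Fin 4 → ℂ, R.mulVec x = 0 ↔ x = 0 := by
    intro x
    simp only [hR, funext_iff, Matrix.mulVec_diagonal, Pi.zero_apply, mul_eq_zero]
    refine forall_congr' fun i => ?_
    have hne : (if (i : ℕ) < 2 then ((e * b / c : ℝ) : ℂ) else ((e * a / c : ℝ) : ℂ)) ≠ 0 := by
      split_ifs <;>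
        exact Complex.ofReal_ne_zero.mpr (div_ne_zero (mul_ne_zero he0 (by positivity)) hcos)
    exact or_iff_right hne
  have R1 : ((Mtheta θ).mulVec v
        = (((e : ℝ) : ℂ) • (Complex.I • G)).mulVec ((Mtheta θ).mulVec v))
      ↔ (((1 : Matrix (Fin 4) (Fin 4) ℂ) - ((e : ℝ) : ℂ) • (Complex.I • G)).mulVec
          ((Mtheta θ).mulVec v) = 0) := by
    rw [Matrix.sub_mulVec, Matrix.one_mulVec, sub_eq_zero, eq_comm]
  have R2 : ((1 : Matrix (Fin 4) (Fin 4) ℂ) - ((e : ℝ) : ℂ) • (Complex.I • G)).mulVec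
        ((Mtheta θ).mulVec v)
      = R.mulVec ((((1 : Matrix (Fin 4) (Fin 4) ℂ) - K)).mulVec v) := by
    rw [Matrix.mulVec_mulVec, Matrix.mulVec_mulVec, H]
  rw [L, ← Matrix.smul_mulVec, ← Matrix.smul_mulVec, R1, R2, hRinj]

end
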